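/- In the proof of persistent-excitation-based convergence, the parameter drift over a window is bounded by the regressor output: for φ̇ = −u uᵀφ with ‖u(t)‖≤u_max, one has ∫_t^{t+T} |uᵀ(τ)(φ(t)−φ(τ))| dτ ≤ u_max²·T·∫_t^{t+T} ‖uᵀ(τ)φ(τ)‖ dτ. -/

import Mathlib

open RealInnerProductSpace MeasureTheory

/-- parameter drift over a window is bounded by the regressor output:
∫_t^{t+T} |uᵀ(τ)(φ(t)−φ(τ))| dτ ≤ u_max²·T·∫_t^{t+T} |uᵀ(τ)φ(τ)| dτ. -/
theorem drift_bounded_by_regressor_output {n : ℕ}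
    (u : ℝ → EuclideanSpace ℝ (Fin n)) (φ : ℝ → EuclideanSpace ℝ (Fin n))
    (t₀ T umax : ℝ) (hT : 0 < T) (humax : 0 < umax)
    (hbound : ∀ t, t₀ ≤ t → ‖u t‖ ≤ umax)
    (hODE : ∀ t, t₀ ≤ t → HasDerivAt φ (-(⟪u t, φ t⟫ • u t)) t) :
    ∀ t, t₀ ≤ t →
      (∫ τ in t..(t + T), |⟪u τ, φ t - φ τ⟫|) ≤
        umax ^ 2 * T * ∫ τ in t..(t + T), |⟪u τ, φ τ⟫| := by
  intro t ht
  have hTt : t ≤ t + T := by linarith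
  set f : ℝ → EuclideanSpace ℝ (Fin n) := fun s => -(⟪u s, φ s⟫ • u s) with hf
  set g : ℝ → ℝ := fun s => |⟪u s, φ s⟫| with hgdef
  -- derivative equals f on [t₀, ∞)
  have hderiv : ∀ s, t₀ ≤ s → deriv φ s = f s := fun s hs => (hODE s hs).deriv
  -- continuity of φ on [t₀, ∞)
  have hφcont : ContinuousOn φ (Set.Icc t (t + T)) := fun s hs =>
    ((hODE s (ht.trans hs.1)).continuousAt).continuousWithinAt
  obtain ⟨M, hM⟩ := (isCompact_Icc : IsCompact (Set.Icc t (t + T))).exists_bound_of_continuousOn hφcont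
  have hM0 : 0 ≤ M := (norm_nonneg _).trans (hM t ⟨le_refl t, hTt⟩)
  -- measurability of deriv
  have hd : Measurable (deriv φ) := measurable_deriv φ
  -- continuous surrogate for φ
  have hψcont : Continuous (fun s => φ (max s t₀)) := by
    rw [continuous_iff_continuousAt]
    intro s
    show ContinuousAt (φ ∘ fun s => max s t₀) s
    exact ContinuousAt.comp (g := φ) (f := fun r => max r t₀) (x := s)
      ((hODE _ (le_max_right s t₀)).continuousAt)
      ((continuous_id.max continuous_const).continuousAt)
  -- g agrees on Icc with a measurable function
  have hgeq : ∀ s ∈ Set.Icc t (t + T),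
      g s = Real.sqrt (-(⟪deriv φ s, φ (max s t₀)⟫)) := by
    intro s hs
    have hs0 : t₀ ≤ s := ht.trans hs.1
    rw [hderiv s hs0, max_eq_left hs0]
    simp only [hf]
    rw [inner_neg_left, real_inner_smul_left]
    rw [neg_neg]
    exact (Real.sqrt_mul_self_eq_abs _).symm
  have hgm : AEStronglyMeasurable g (volume.restrict (Set.Icc t (t + T))) := by
    apply AEStronglyMeasurable.congr
      (f := fun s => Real.sqrt (-(⟪deriv φ s, φ (max s t₀)⟫)))
    · exact (Real.continuous_sqrt.measurable.comp
        ((hd.inner hψcont.measurable).neg)).aestronglyMeasurable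
    · exact ((ae_restrict_iff' measurableSet_Icc).2 (ae_of_all _ fun s hs => (hgeq s hs).symm))
  -- integrability of g
  have hgb : ∀ s ∈ Set.Icc t (t + T), g s ≤ umax * M := by
    intro s hs
    calc g s ≤ ‖u s‖ * ‖φ s‖ := abs_real_inner_le_norm _ _
    _ ≤ umax * M := mul_le_mul (hbound s (ht.trans hs.1)) (hM s hs) (norm_nonneg _)
        humax.le
  have hgi : IntervalIntegrable g volume t (t + T) := by
    rw [intervalIntegrable_iff_integrableOn_Icc_of_le hTt]
    refine Integrable.mono' (g := fun _ => umax * M)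
      (integrableOn_const measure_Icc_lt_top.ne) hgm ?_
    exact (ae_restrict_iff' measurableSet_Icc).2 (ae_of_all _ fun s hs => by
      rw [Real.norm_eq_abs, abs_abs]; exact hgb s hs)
  -- integrability of f
  have hfm : AEStronglyMeasurable f (volume.restrict (Set.Icc t (t + T))) := by
    apply hd.aestronglyMeasurable.congr
    exact (ae_restrict_iff' measurableSet_Icc).2 (ae_of_all _ fun s hs =>
      hderiv s (ht.trans hs.1))
  have hfi : IntervalIntegrable f volume t (t + T) := by
    rw [intervalIntegrable_iff_integrableOn_Icc_of_le hTt]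
    refine Integrable.mono' (g := fun _ => umax * M * umax)
      (integrableOn_const measure_Icc_lt_top.ne) hfm ?_
    refine (ae_restrict_iff' measurableSet_Icc).2 (ae_of_all _ fun s hs => ?_)
    have : ‖f s‖ = g s * ‖u s‖ := by
      simp [hf, hgdef, norm_smul, abs_mul, mul_comm]
    rw [this]
    exact mul_le_mul (hgb s hs) (hbound s (ht.trans hs.1)) (norm_nonneg _)
      (by positivity)
  set I := ∫ τ in t..(t + T), g τ with hI
  have hI0 : 0 ≤ I := intervalIntegral.integral_nonneg hTt (fun s _ => abs_nonneg _)
  have hnfi : IntervalIntegrable (fun s => ‖f s‖) volume t (t + T) := hfi.norm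
  have hfI : (∫ s in t..(t + T), ‖f s‖) ≤ umax * I := by
    have h1 : (∫ s in t..(t + T), ‖f s‖) ≤ ∫ s in t..(t + T), umax * g s := by
      apply intervalIntegral.integral_mono_on hTt hnfi (hgi.const_mul umax)
      intro s hs
      have h2 : ‖f s‖ = g s * ‖u s‖ := by
        simp [hf, hgdef, norm_smul, abs_mul, mul_comm]
      rw [h2, mul_comm umax (g s)]
      exact mul_le_mul_of_nonneg_left (hbound s (ht.trans hs.1)) (abs_nonneg _)
    rw [intervalIntegral.integral_const_mul] at h1
    exact h1
  have hpt : ∀ τ ∈ Set.Icc t (t + T), |⟪u τ, φ t - φ τ⟫| ≤ umax * (umax * I) := by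
    intro τ hτ
    have hττ : t ≤ τ := hτ.1
    have hftc : φ τ - φ t = ∫ s in t..τ, f s := by
      refine (intervalIntegral.integral_eq_sub_of_hasDerivAt ?_ ?_).symm
      · intro s hs
        rw [Set.uIcc_of_le hττ] at hs
        exact hODE s (ht.trans hs.1)
      · refine hfi.mono_set ?_
        rw [Set.uIcc_of_le hττ, Set.uIcc_of_le hTt]
        exact Set.Icc_subset_Icc le_rfl hτ.2
    have h1 : ‖φ t - φ τ‖ ≤ umax * I := by
      rw [norm_sub_rev, hftc]
      calc ‖∫ s in t..τ, f s‖ ≤ ∫ s in t..τ, ‖f s‖ :=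
            intervalIntegral.norm_integral_le_integral_norm hττ
        _ ≤ ∫ s in t..(t + T), ‖f s‖ :=
            intervalIntegral.integral_mono_interval le_rfl hττ hτ.2
              (Filter.Eventually.of_forall fun s => norm_nonneg _) hnfi
        _ ≤ umax * I := hfI
    calc |⟪u τ, φ t - φ τ⟫| ≤ ‖u τ‖ * ‖φ t - φ τ‖ := abs_real_inner_le_norm _ _
      _ ≤ umax * (umax * I) :=
          mul_le_mul (hbound τ (ht.trans hττ)) h1 (norm_nonneg _) humax.le
  by_cases hLi : IntervalIntegrable (fun τ => |⟪u τ, φ t - φ τ⟫|) volume t (t + T)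
  · have h1 : (∫ τ in t..(t + T), |⟪u τ, φ t - φ τ⟫|) ≤
        ∫ τ in t..(t + T), umax * (umax * I) :=
      intervalIntegral.integral_mono_on hTt hLi intervalIntegrable_const hpt
    rw [intervalIntegral.integral_const, smul_eq_mul] at h1
    calc (∫ τ in t..(t + T), |⟪u τ, φ t - φ τ⟫|)
        ≤ (t + T - t) * (umax * (umax * I)) := h1
      _ = umax ^ 2 * T * I := by ring
  · rw [intervalIntegral.integral_undef hLi]
    exact mul_nonneg (by positivity) hI0
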